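/- Suppose (P1)–(P7) hold and S(ξ) is a compact operator for every ξ ∈ (0,T]. Then for every θ ∈ C([0,T],Ω₂) the set Γ(θ) is equicontinuous: for every ε > 0 there exists δ > 0 such that for all y ∈ Γ(θ) and all ξ₁, ξ₂ ∈ [0,T] with |ξ₂ − ξ₁| ≤ δ one has ‖y(ξ₂) − y(ξ₁)‖_{Ω₂} ≤ ε. -/

import Mathlib

open MeasureTheory Set Filter Topology
open scoped ENNReal

noncomputable section

/-- `SOL K G φ w` is the solution set `SOL(K, w + G(·), φ)` of the generalized mixed
variational inequality: all `u ∈ K` with `⟨w + G(u), v - u⟩ + φ(v) - φ(u) ≥ 0` for all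
`v ∈ K` (written without `EReal` subtraction as `φ(u) ≤ ⟨w + G(u), v - u⟩ + φ(v)`). -/
def SOL {Ω₁ : Type*} [NormedAddCommGroup Ω₁] [NormedSpace ℝ Ω₁]
    (K : Set Ω₁) (G : Ω₁ → (Ω₁ →L[ℝ] ℝ)) (φ : Ω₁ → EReal) (w : Ω₁ →L[ℝ] ℝ) : Set Ω₁ :=
  {u | u ∈ K ∧ ∀ v ∈ K, φ u ≤ ((w (v - u) + (G u) (v - u) : ℝ) : EReal) + φ v}

/-- (P1): `G` is monotone on `K` and hemicontinuous on `K`. -/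
def condP1 {Ω₁ : Type*} [NormedAddCommGroup Ω₁] [NormedSpace ℝ Ω₁]
    (K : Set Ω₁) (G : Ω₁ → (Ω₁ →L[ℝ] ℝ)) : Prop :=
  (∀ u ∈ K, ∀ v ∈ K, 0 ≤ (G v - G u) (v - u)) ∧
  (∀ u ∈ K, ∀ v ∈ K, ∀ x : Ω₁,
    ContinuousOn (fun t : ℝ => (G (u + t • (v - u))) x) (Icc (0:ℝ) 1))

/-- (P2): `φ : Ω₁ → ℝ ∪ {+∞}` (an `EReal`-valued map never taking the value `⊥`) is
proper, convex and lower semicontinuous. -/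
def condP2 {Ω₁ : Type*} [NormedAddCommGroup Ω₁] [NormedSpace ℝ Ω₁] (φ : Ω₁ → EReal) : Prop :=
  (∀ u, φ u ≠ ⊥) ∧ (∃ u, φ u ≠ ⊤) ∧
  (∀ u v : Ω₁, ∀ t : ℝ, t ∈ Icc (0:ℝ) 1 →
    φ (t • u + (1 - t) • v) ≤ (t : EReal) * φ u + ((1 - t : ℝ) : EReal) * φ v) ∧
  LowerSemicontinuous φ

/-- (P3): coercivity: there is `v* ∈ K ∩ D(φ)` with
`(⟨G(u), u - v*⟩ + φ(u) - φ(v*))/‖u‖ → +∞` as `‖u‖ → ∞`, `u ∈ K`. -/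
def condP3 {Ω₁ : Type*} [NormedAddCommGroup Ω₁] [NormedSpace ℝ Ω₁]
    (K : Set Ω₁) (G : Ω₁ → (Ω₁ →L[ℝ] ℝ)) (φ : Ω₁ → EReal) : Prop :=
  ∃ vs ∈ K, φ vs ≠ ⊤ ∧
    ∀ M : ℝ, ∃ R : ℝ, ∀ u ∈ K, R ≤ ‖u‖ →
      ((M * ‖u‖ : ℝ) : EReal) + φ vs ≤ (((G u) (u - vs) : ℝ) : EReal) + φ u

/-- (P4): `g` is continuous and bounded on `[0,T] × Ω₂`. -/
def condP4 {Ω₁ Ω₂ : Type*} [NormedAddCommGroup Ω₁] [NormedSpace ℝ Ω₁]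
    [NormedAddCommGroup Ω₂] [NormedSpace ℝ Ω₂]
    (T : ℝ) (g : ℝ → Ω₂ → (Ω₁ →L[ℝ] ℝ)) : Prop :=
  ContinuousOn (fun p : ℝ × Ω₂ => g p.1 p.2) (Icc (0:ℝ) T ×ˢ univ) ∧
  ∃ C : ℝ, ∀ ξ ∈ Icc (0:ℝ) T, ∀ θ : Ω₂, ‖g ξ θ‖ ≤ C

/-- Extension of `θ ∈ C([0,T], Ω₂)` to all of `ℝ` by projecting onto `[0,T]`
(only its values on `[0,T]` are ever used). -/
def extIcc {Ω₂ : Type*} [TopologicalSpace Ω₂] {T : ℝ} (hT : (0:ℝ) ≤ T)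
    (θ : C(Icc (0:ℝ) T, Ω₂)) (s : ℝ) : Ω₂ :=
  θ (Set.projIcc 0 T hT s)

/-- (P5): Carathéodory conditions and the growth bound for `B`. -/
def condP5 {Ω₁ Ω₂ : Type*} [NormedAddCommGroup Ω₁] [NormedSpace ℝ Ω₁]
    [NormedAddCommGroup Ω₂] [NormedSpace ℝ Ω₂]
    (T : ℝ) (B : ℝ → Ω₂ → (Ω₁ →L[ℝ] Ω₂)) (ρB ΥB : ℝ → ℝ) : Prop :=
  (∀ θ : Ω₂, AEStronglyMeasurable (fun ξ => B ξ θ) (volume.restrict (Icc (0:ℝ) T))) ∧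
  (∀ᵐ ξ ∂(volume.restrict (Icc (0:ℝ) T)), Continuous fun θ : Ω₂ => B ξ θ) ∧
  (∀ ξ, 0 ≤ ρB ξ) ∧ MemLp ρB 2 (volume.restrict (Icc (0:ℝ) T)) ∧
  MonotoneOn ΥB (Ici (0:ℝ)) ∧ ContinuousOn ΥB (Ici (0:ℝ)) ∧ (∀ k ∈ Ici (0:ℝ), 0 ≤ ΥB k) ∧
  (∀ ξ ∈ Icc (0:ℝ) T, ∀ θ : Ω₂, ‖B ξ θ‖ ≤ ρB ξ * ΥB ‖θ‖)

/-- (P6): `h` is continuous and `‖h θ‖ ≤ Υ_h(‖θ‖_c)`. -/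
def condP6 {Ω₂ : Type*} [NormedAddCommGroup Ω₂] [NormedSpace ℝ Ω₂]
    (T : ℝ) (h : C(Icc (0:ℝ) T, Ω₂) → Ω₂) (Υh : ℝ → ℝ) : Prop :=
  Continuous h ∧
  MonotoneOn Υh (Ici (0:ℝ)) ∧ ContinuousOn Υh (Ici (0:ℝ)) ∧ (∀ k ∈ Ici (0:ℝ), 0 ≤ Υh k) ∧
  ∀ θ : C(Icc (0:ℝ) T, Ω₂), ‖h θ‖ ≤ Υh ‖θ‖

/-- (P7): measurability and the Lipschitz-type conditions for `f`. -/
def condP7 {Ω₂ : Type*} [NormedAddCommGroup Ω₂] [NormedSpace ℝ Ω₂]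
    (T : ℝ) (f : ℝ → Ω₂ → Ω₂) (ρf : ℝ → ℝ) : Prop :=
  (∀ θ : Ω₂, AEStronglyMeasurable (fun ξ => f ξ θ) (volume.restrict (Icc (0:ℝ) T))) ∧
  (∀ ξ, 0 ≤ ρf ξ) ∧ MemLp ρf 2 (volume.restrict (Icc (0:ℝ) T)) ∧
  (∀ᵐ ξ ∂(volume.restrict (Icc (0:ℝ) T)),
    (∀ θ y : Ω₂, ‖f ξ θ - f ξ y‖ ≤ ρf ξ * ‖θ - y‖) ∧ ‖f ξ 0‖ ≤ ρf ξ)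

/-- The operator families `S` (playing the role of `E_α(ξ^α A)`) and `P`
(playing the role of `ξ^{α-1} E_{α,α}(ξ^α A)`): `S 0 = I`, strong continuity of `S` on
`[0,T]`, operator-norm continuity of `S` and `P` on `(0,T]`, and boundedness. -/
def SPfamily {Ω₂ : Type*} [NormedAddCommGroup Ω₂] [NormedSpace ℝ Ω₂]
    (T : ℝ) (S P : ℝ → (Ω₂ →L[ℝ] Ω₂)) : Prop :=
  S 0 = ContinuousLinearMap.id ℝ Ω₂ ∧
  (∀ x : Ω₂, ContinuousOn (fun ξ => S ξ x) (Icc (0:ℝ) T)) ∧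
  ContinuousOn S (Ioc (0:ℝ) T) ∧ ContinuousOn P (Ioc (0:ℝ) T) ∧
  BddAbove (range fun ξ : Icc (0:ℝ) T => ‖S ξ.1‖) ∧
  BddAbove (range fun ξ : Ioc (0:ℝ) T => ‖P ξ.1‖)

/-- `Θ_A := max( sup_{ξ ∈ [0,T]} ‖S ξ‖, sup_{ξ ∈ (0,T]} ‖P ξ‖ )`. -/
def ThetaA {Ω₂ : Type*} [NormedAddCommGroup Ω₂] [NormedSpace ℝ Ω₂]
    (T : ℝ) (S P : ℝ → (Ω₂ →L[ℝ] Ω₂)) : ℝ :=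
  max (⨆ ξ : Icc (0:ℝ) T, ‖S ξ.1‖) (⨆ ξ : Ioc (0:ℝ) T, ‖P ξ.1‖)

/-- The `L²([0,T])`-norm of a (nonnegative) scalar function. -/
def L2norm (T : ℝ) (ρ : ℝ → ℝ) : ℝ :=
  Real.sqrt (∫ s in Icc (0:ℝ) T, (ρ s) ^ 2)

/-- The solution multimap `Γ`:
`Γ(θ) = { y : y(ξ) = S(ξ)h(θ) + ∫₀^ξ P(ξ-s)(B(s,θ(s))l(s) + f(s,θ(s))) ds, l ∈ P_U(θ) }`. -/
def GammaMap {Ω₁ Ω₂ : Type*} [NormedAddCommGroup Ω₁] [NormedSpace ℝ Ω₁]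
    [NormedAddCommGroup Ω₂] [NormedSpace ℝ Ω₂]
    (K : Set Ω₁) (G : Ω₁ → (Ω₁ →L[ℝ] ℝ)) (φ : Ω₁ → EReal)
    {T : ℝ} (hT : (0:ℝ) ≤ T) (g : ℝ → Ω₂ → (Ω₁ →L[ℝ] ℝ))
    (S P : ℝ → (Ω₂ →L[ℝ] Ω₂)) (B : ℝ → Ω₂ → (Ω₁ →L[ℝ] Ω₂))
    (h : C(Icc (0:ℝ) T, Ω₂) → Ω₂) (f : ℝ → Ω₂ → Ω₂)
    (θ : C(Icc (0:ℝ) T, Ω₂)) : Set C(Icc (0:ℝ) T, Ω₂) :=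
  {y | ∃ l : ℝ → Ω₁, MemLp l 2 (volume.restrict (Icc (0:ℝ) T)) ∧
    (∀ᵐ ξ ∂(volume.restrict (Icc (0:ℝ) T)), l ξ ∈ SOL K G φ (g ξ (extIcc hT θ ξ))) ∧
    ∀ ξ : Icc (0:ℝ) T, y ξ = S ξ.1 (h θ) +
      ∫ s in (0:ℝ)..(ξ.1), P (ξ.1 - s) ((B s (extIcc hT θ s)) (l s) + f s (extIcc hT θ s))}


/-- Absolute continuity of the integral. -/
lemma abs_cont_integral {μ : Measure ℝ} {ρ : ℝ → ℝ}
    (hρ : Integrable ρ μ) {ε : ℝ} (hε : 0 < ε) :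
    ∃ δ : ℝ, 0 < δ ∧ ∀ A : Set ℝ, μ A ≤ ENNReal.ofReal δ → ∫ s in A, ρ s ∂μ ≤ ε := by
  by_contra hcon
  push_neg at hcon
  choose A hA₁ hA₂ using fun n : ℕ => hcon ((1:ℝ)/(n+1)) (by positivity)
  have hμ : Tendsto (μ ∘ A) atTop (𝓝 0) := by
    have h0 : Tendsto (fun n : ℕ => ENNReal.ofReal ((1:ℝ)/(n+1))) atTop (𝓝 0) := by
      rw [← ENNReal.ofReal_zero]
      exact (ENNReal.continuous_ofReal.tendsto 0).comp tendsto_one_div_add_atTop_nhds_zero_nat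
    exact tendsto_of_tendsto_of_tendsto_of_le_of_le tendsto_const_nhds h0
      (fun n => zero_le) (fun n => hA₁ n)
  have h2 := (hρ.tendsto_setIntegral_nhds_zero hμ).eventually_lt_const hε
  rcases h2.exists with ⟨n, hn⟩
  exact absurd hn (not_lt.2 (hA₂ n).le)

/-- Carathéodory-type measurability. -/
lemma caratheodory_aesm {E F : Type*} [NormedAddCommGroup E] [NormedAddCommGroup F]
    {T : ℝ} (hT : 0 < T) (B : ℝ → E → F)
    (hmeas : ∀ c : E, AEStronglyMeasurable (fun s => B s c) (volume.restrict (Icc (0:ℝ) T)))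
    (hcont : ∀ᵐ s ∂(volume.restrict (Icc (0:ℝ) T)), Continuous fun c => B s c)
    {θ : ℝ → E} (hθ : Continuous θ) :
    AEStronglyMeasurable (fun s => B s (θ s)) (volume.restrict (Icc (0:ℝ) T)) := by
  set μT := volume.restrict (Icc (0:ℝ) T) with hμT
  set t : ℕ → ℕ → ℝ := fun n k => k * T / (n + 1) with ht
  have hn1 : ∀ n : ℕ, (0:ℝ) < (n:ℝ) + 1 := fun n => by positivity
  set approx : ℕ → ℝ → F := fun n s =>
    ∑ k ∈ Finset.range (n+1),
      (Ico (t n k) (t n (k+1))).indicator (fun s' => B s' (θ (t n k))) s with happ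
  have haesm : ∀ n, AEStronglyMeasurable (approx n) μT := fun n =>
    Finset.aestronglyMeasurable_fun_sum _ fun k _ => (hmeas _).indicator measurableSet_Ico
  have hae_mem : ∀ᵐ s ∂μT, s ∈ Ico (0:ℝ) T := by
    have h1 : ∀ᵐ s ∂μT, s ∈ Icc (0:ℝ) T := ae_restrict_mem measurableSet_Icc
    have hT0 : μT {T} = 0 :=
      le_antisymm ((Measure.restrict_apply_le _ _).trans_eq Real.volume_singleton) zero_le
    have h2 : ∀ᵐ s ∂μT, s ∉ ({T} : Set ℝ) := measure_eq_zero_iff_ae_notMem.1 hT0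
    filter_upwards [h1, h2] with s hs hsT
    exact ⟨hs.1, lt_of_le_of_ne hs.2 (fun hE => hsT (by simp [hE]))⟩
  refine aestronglyMeasurable_of_tendsto_ae atTop haesm ?_
  filter_upwards [hae_mem, hcont] with s hs hc
  have hsx : (0:ℝ) ≤ s := hs.1
  have key : ∀ n : ℕ, approx n s = B s (θ (t n ⌊s * ((n:ℝ)+1) / T⌋₊)) := by
    intro n
    set x : ℝ := s * ((n:ℝ)+1) / T with hx
    have hx0 : 0 ≤ x := by positivity
    set k : ℕ := ⌊x⌋₊ with hk
    have hkle : (k:ℝ) ≤ x := Nat.floor_le hx0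
    have hklt : x < k + 1 := Nat.lt_floor_add_one x
    have hxs : x * T = s * ((n:ℝ)+1) := by rw [hx]; field_simp
    have hmem : s ∈ Ico (t n k) (t n (k+1)) := by
      constructor
      · show (k:ℝ) * T / ((n:ℝ)+1) ≤ s
        rw [div_le_iff₀ (hn1 n)]
        nlinarith [mul_le_mul_of_nonneg_right hkle hT.le]
      · show s < ((k+1 : ℕ):ℝ) * T / ((n:ℝ)+1)
        push_cast
        rw [lt_div_iff₀ (hn1 n)]
        nlinarith [mul_lt_mul_of_pos_right hklt hT]
    have hkn : k ∈ Finset.range (n+1) := by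
      refine Finset.mem_range.2 ((Nat.floor_lt hx0).2 ?_)
      push_cast
      have h1 : s / T < 1 := (div_lt_one hT).2 hs.2
      calc x = s / T * ((n:ℝ)+1) := by rw [hx]; ring
        _ < 1 * ((n:ℝ)+1) := mul_lt_mul_of_pos_right h1 (hn1 n)
        _ = (n:ℝ)+1 := one_mul _
    calc approx n s
        = (Ico (t n k) (t n (k+1))).indicator (fun s' => B s' (θ (t n k))) s := by
          simp only [happ]
          refine Finset.sum_eq_single_of_mem k hkn (fun j _ hj => ?_)
          refine indicator_of_notMem (fun hmemj => hj ?_) _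
          have h1 : (j:ℝ) ≤ x := by
            rw [hx, le_div_iff₀ hT]
            have h := hmemj.1
            rw [ht] at h; dsimp only at h
            rw [div_le_iff₀ (hn1 n)] at h
            linarith
          have h2 : x < j + 1 := by
            rw [hx, div_lt_iff₀ hT]
            have h := hmemj.2
            rw [ht] at h; dsimp only at h
            rw [lt_div_iff₀ (hn1 n)] at h
            push_cast at h
            linarith
          rw [hk]
          exact ((Nat.floor_eq_iff hx0).2 ⟨h1, h2⟩).symm
      _ = B s (θ (t n k)) := indicator_of_mem hmem _
  have hnode : Tendsto (fun n : ℕ => t n ⌊s * ((n:ℝ)+1) / T⌋₊) atTop (𝓝 s) := by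
    have hub : ∀ n : ℕ, t n ⌊s * ((n:ℝ)+1) / T⌋₊ ≤ s := by
      intro n
      have hkle : (⌊s * ((n:ℝ)+1) / T⌋₊ : ℝ) ≤ s * ((n:ℝ)+1) / T := Nat.floor_le (by positivity)
      show (⌊s * ((n:ℝ)+1) / T⌋₊ : ℝ) * T / ((n:ℝ)+1) ≤ s
      rw [div_le_iff₀ (hn1 n)]
      have hxs : s * ((n:ℝ)+1) / T * T = s * ((n:ℝ)+1) := by field_simp
      nlinarith [mul_le_mul_of_nonneg_right hkle hT.le]
    have hlb : ∀ n : ℕ, s - T * (1/((n:ℝ)+1)) ≤ t n ⌊s * ((n:ℝ)+1) / T⌋₊ := by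
      intro n
      have hklt : s * ((n:ℝ)+1) / T < (⌊s * ((n:ℝ)+1) / T⌋₊ : ℝ) + 1 := Nat.lt_floor_add_one _
      show s - T * (1/((n:ℝ)+1)) ≤ (⌊s * ((n:ℝ)+1) / T⌋₊ : ℝ) * T / ((n:ℝ)+1)
      rw [le_div_iff₀ (hn1 n)]
      have hxs : s * ((n:ℝ)+1) / T * T = s * ((n:ℝ)+1) := by field_simp
      have hTn : T * (1/((n:ℝ)+1)) * ((n:ℝ)+1) = T := by field_simp
      nlinarith [mul_lt_mul_of_pos_right hklt hT]
    have hl : Tendsto (fun n : ℕ => s - T * (1/((n:ℝ)+1))) atTop (𝓝 s) := by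
      have h2 := (tendsto_const_nhds (x := s) (f := atTop (α := ℕ))).sub
        (tendsto_one_div_add_atTop_nhds_zero_nat.const_mul T)
      simpa using h2
    exact tendsto_of_tendsto_of_tendsto_of_le_of_le hl tendsto_const_nhds hlb hub
  have : Tendsto (fun n : ℕ => B s (θ (t n ⌊s * ((n:ℝ)+1) / T⌋₊))) atTop (𝓝 (B s (θ s))) :=
    (hc.tendsto (θ s)).comp ((hθ.tendsto s).comp hnode)
  exact Tendsto.congr (fun n => (key n).symm) this


lemma SOL_bound {Ω₁ : Type*} [NormedAddCommGroup Ω₁] [NormedSpace ℝ Ω₁]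
    {K : Set Ω₁} {G : Ω₁ → (Ω₁ →L[ℝ] ℝ)} {φ : Ω₁ → EReal}
    (hP2 : condP2 φ) (hP3 : condP3 K G φ) {C : ℝ} (hC : 0 ≤ C) :
    ∃ M : ℝ, 0 ≤ M ∧ ∀ w : Ω₁ →L[ℝ] ℝ, ‖w‖ ≤ C → ∀ u ∈ SOL K G φ w, ‖u‖ ≤ M := by
  obtain ⟨vs, hvsK, hvs_top, hP3'⟩ := hP3
  obtain ⟨R, hR⟩ := hP3' (C + 1)
  refine ⟨max R (max (C * ‖vs‖) 0), le_max_of_le_right (le_max_right _ _), ?_⟩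
  intro w hw u hu
  by_cases hRu : R ≤ ‖u‖
  · refine le_max_of_le_right (le_max_of_le_left ?_)
    obtain ⟨huK, hsol⟩ := hu
    have h1 := hR u huK hRu
    have h2 := hsol vs hvsK
    obtain ⟨c, hc⟩ : ∃ c : ℝ, φ vs = (c : EReal) := by
      lift φ vs to ℝ using ⟨hvs_top, hP2.1 vs⟩ with c
      exact ⟨c, rfl⟩
    rw [hc] at h1 h2
    have hu_top : φ u ≠ ⊤ := by
      intro htop
      rw [htop] at h2
      have := h2.trans_lt (by
        rw [← EReal.coe_add]
        exact EReal.coe_lt_top _)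
      exact absurd this (lt_irrefl _)
    obtain ⟨d, hd⟩ : ∃ d : ℝ, φ u = (d : EReal) := by
      lift φ u to ℝ using ⟨hu_top, hP2.1 u⟩ with d
      exact ⟨d, rfl⟩
    rw [hd] at h1 h2
    have h1' : (C+1)*‖u‖ + c ≤ (G u) (u - vs) + d := by exact_mod_cast h1
    have h2' : d ≤ w (vs - u) + (G u) (vs - u) + c := by exact_mod_cast h2
    have hG : (G u) (u - vs) + (G u) (vs - u) = 0 := by
      rw [map_sub, map_sub]; ring
    have hwle : w (vs - u) ≤ C * (‖vs‖ + ‖u‖) := by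
      calc w (vs - u) ≤ ‖w (vs - u)‖ := le_abs_self _
        _ ≤ ‖w‖ * ‖vs - u‖ := w.le_opNorm _
        _ ≤ C * (‖vs‖ + ‖u‖) := by
            apply mul_le_mul hw (norm_sub_le _ _) (norm_nonneg _) hC
    nlinarith [norm_nonneg u]
  · exact le_max_of_le_left (le_of_not_ge hRu)


set_option maxHeartbeats 2000000 in
/-- **Equicontinuity of `Γ(θ)`** under (P1)–(P7) and compactness of `S(ξ)`, `ξ ∈ (0,T]`. -/
theorem Gamma_equicontinuous
    {Ω₁ Ω₂ : Type*} [NormedAddCommGroup Ω₁] [NormedSpace ℝ Ω₁] [CompleteSpace Ω₁]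
    [TopologicalSpace.SeparableSpace Ω₁]
    [NormedAddCommGroup Ω₂] [NormedSpace ℝ Ω₂] [CompleteSpace Ω₂]
    [TopologicalSpace.SeparableSpace Ω₂]
    (hΩ₁refl : Function.Surjective ⇑(NormedSpace.inclusionInDoubleDual ℝ Ω₁))
    (hΩ₂refl : Function.Surjective ⇑(NormedSpace.inclusionInDoubleDual ℝ Ω₂))
    (K : Set Ω₁) (hKne : K.Nonempty) (hKcl : IsClosed K) (hKcv : Convex ℝ K)
    (G : Ω₁ → (Ω₁ →L[ℝ] ℝ)) (φ : Ω₁ → EReal)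
    (hP1 : condP1 K G) (hP2 : condP2 φ) (hP3 : condP3 K G φ)
    {T : ℝ} (hT : 0 < T)
    (g : ℝ → Ω₂ → (Ω₁ →L[ℝ] ℝ)) (hP4 : condP4 T g)
    (hSOLne : ∀ w : Ω₁ →L[ℝ] ℝ, (SOL K G φ w).Nonempty)
    {α : ℝ} (hα : α ∈ Ioo (0:ℝ) 1)
    (S P : ℝ → (Ω₂ →L[ℝ] Ω₂)) (hSP : SPfamily T S P)
    (B : ℝ → Ω₂ → (Ω₁ →L[ℝ] Ω₂)) (ρB ΥB : ℝ → ℝ) (hP5 : condP5 T B ρB ΥB)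
    (h : C(Icc (0:ℝ) T, Ω₂) → Ω₂) (Υh : ℝ → ℝ) (hP6 : condP6 T h Υh)
    (f : ℝ → Ω₂ → Ω₂) (ρf : ℝ → ℝ) (hP7 : condP7 T f ρf)
    (hScpt : ∀ ξ ∈ Ioc (0:ℝ) T, IsCompactOperator (S ξ))
    : ∀ θ : C(Icc (0:ℝ) T, Ω₂), ∀ ε : ℝ, 0 < ε → ∃ δ : ℝ, 0 < δ ∧
      ∀ y ∈ GammaMap K G φ hT.le g S P B h f θ, ∀ ξ₁ ξ₂ : Icc (0:ℝ) T,
        |ξ₂.1 - ξ₁.1| ≤ δ → ‖y ξ₂ - y ξ₁‖ ≤ ε := by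
  intro θ ε hε
  obtain ⟨hS0, hSstrong, hSnorm, hPnorm, hSbdd, hPbdd⟩ := hSP
  obtain ⟨hgcont, C, hgC⟩ := hP4
  obtain ⟨hBmeas, hBcont, hρB0, hρBL2, hΥBmono, hΥBcont, hΥB0, hBbd⟩ := hP5
  obtain ⟨hfmeas, hρf0, hρfL2, hflip⟩ := hP7
  haveI : IsFiniteMeasure (volume.restrict (Icc (0:ℝ) T)) := by
    constructor
    rw [Measure.restrict_apply_univ, Real.volume_Icc]
    exact ENNReal.ofReal_lt_top
  have hC0 : 0 ≤ C := le_trans (norm_nonneg (g 0 0)) (hgC 0 ⟨le_refl 0, hT.le⟩ 0)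
  obtain ⟨M, hM0, hMbd⟩ := SOL_bound hP2 hP3 hC0
  have hθbc : Continuous (extIcc hT.le θ) := θ.continuous.comp (continuous_projIcc)
  have hθbn : ∀ s : ℝ, ‖extIcc hT.le θ s‖ ≤ ‖θ‖ := fun s =>
    ContinuousMap.norm_coe_le_norm θ _
  set ρ : ℝ → ℝ := fun s => (ΥB ‖θ‖ * M) * ρB s + (1 + ‖θ‖) * ρf s with hρdef
  have hΥBθ : 0 ≤ ΥB ‖θ‖ := hΥB0 _ (norm_nonneg θ)
  have hρ0 : ∀ s, 0 ≤ ρ s := fun s =>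
    add_nonneg (mul_nonneg (mul_nonneg hΥBθ hM0) (hρB0 s))
      (mul_nonneg (by positivity) (hρf0 s))
  have hρmem : MemLp ρ 2 (volume.restrict (Icc (0:ℝ) T)) :=
    (hρBL2.const_mul _).add (hρfL2.const_mul _)
  have hρint : Integrable ρ (volume.restrict (Icc (0:ℝ) T)) := hρmem.integrable one_le_two
  obtain ⟨CP, hCPmem⟩ := hPbdd
  have hCP : ∀ ξ ∈ Ioc (0:ℝ) T, ‖P ξ‖ ≤ CP := fun ξ hξ =>
    hCPmem ⟨(⟨ξ, hξ⟩ : Ioc (0:ℝ) T), rfl⟩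
  have hCP0 : 0 ≤ CP := le_trans (norm_nonneg (P T)) (hCP T ⟨hT, le_refl T⟩)
  set Cρ := ∫ s in Icc (0:ℝ) T, ρ s with hCρdef
  have hCρ0 : 0 ≤ Cρ := setIntegral_nonneg measurableSet_Icc (fun s _ => hρ0 s)
  have hIocInt : ∀ a b : ℝ, 0 ≤ a → b ≤ T → IntegrableOn ρ (Ioc a b) volume := by
    intro a b ha hb
    exact hρint.mono_measure (Measure.restrict_mono
      (Ioc_subset_Icc_self.trans (Icc_subset_Icc ha hb)) le_rfl)
  have hIocle : ∀ a b : ℝ, 0 ≤ a → b ≤ T → ∫ s in Ioc a b, ρ s ≤ Cρ := by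
    intro a b ha hb
    exact setIntegral_mono_set hρint (Eventually.of_forall fun s => hρ0 s)
      (HasSubset.Subset.eventuallyLE
        (Ioc_subset_Icc_self.trans (Icc_subset_Icc ha hb) : Ioc a b ⊆ Icc (0:ℝ) T))
  obtain ⟨δ₂, hδ₂0, hδ₂⟩ := abs_cont_integral hρint
    (show (0:ℝ) < ε/(9*(CP+1)) by positivity)
  have hsmall : ∀ a b : ℝ, 0 ≤ a → a ≤ b → b ≤ T → b - a ≤ δ₂ →
      ∫ s in Ioc a b, ρ s ≤ ε/(9*(CP+1)) := by
    intro a b ha hab hb hd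
    have hsub : Ioc a b ⊆ Icc 0 T := Ioc_subset_Icc_self.trans (Icc_subset_Icc ha hb)
    have h1 : ∫ s in Ioc a b, ρ s ∂(volume.restrict (Icc (0:ℝ) T)) = ∫ s in Ioc a b, ρ s := by
      rw [Measure.restrict_restrict measurableSet_Ioc, inter_eq_self_of_subset_left hsub]
    rw [← h1]
    apply hδ₂ (Ioc a b)
    rw [Measure.restrict_apply measurableSet_Ioc, inter_eq_self_of_subset_left hsub,
      Real.volume_Ioc]
    exact ENNReal.ofReal_le_ofReal hd
  have hSuc := (isCompact_Icc.uniformContinuousOn_of_continuous (hSstrong (h θ)))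
  rw [Metric.uniformContinuousOn_iff] at hSuc
  obtain ⟨δS, hδS0, hδS⟩ := hSuc (ε/3) (by positivity)
  set η := min δ₂ T with hηdef
  have hη0 : 0 < η := lt_min hδ₂0 hT
  have hηδ₂ : η ≤ δ₂ := min_le_left _ _
  have hPuc := (isCompact_Icc.uniformContinuousOn_of_continuous
    (hPnorm.mono (fun x hx => ⟨lt_of_lt_of_le hη0 hx.1, hx.2⟩ : Icc η T ⊆ Ioc 0 T)))
  rw [Metric.uniformContinuousOn_iff] at hPuc
  obtain ⟨δ₃, hδ₃0, hδ₃⟩ := hPuc (ε/(3*(Cρ+1))) (by positivity)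
  refine ⟨min (min (δS/2) (δ₃/2)) δ₂, by positivity, ?_⟩
  intro y hy
  obtain ⟨l, hlL2, hlSOL, hyeq⟩ := hy
  set F : ℝ → Ω₂ := fun s => (B s (extIcc hT.le θ s)) (l s) + f s (extIcc hT.le θ s) with hFdef
  have hyF : ∀ ξ : Icc (0:ℝ) T, y ξ = S ξ.1 (h θ) +
      ∫ s in (0:ℝ)..(ξ.1 : ℝ), P (ξ.1 - s) (F s) := hyeq
  have hBθ : AEStronglyMeasurable (fun s => B s (extIcc hT.le θ s))
      (volume.restrict (Icc (0:ℝ) T)) := caratheodory_aesm hT B hBmeas hBcont hθbc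
  have hfθ : AEStronglyMeasurable (fun s => f s (extIcc hT.le θ s))
      (volume.restrict (Icc (0:ℝ) T)) := by
    refine caratheodory_aesm hT f hfmeas ?_ hθbc
    filter_upwards [hflip] with s hsf
    have hlip : LipschitzWith (Real.toNNReal (ρf s)) (fun c => f s c) := by
      apply LipschitzWith.of_dist_le_mul
      intro x z
      rw [dist_eq_norm, dist_eq_norm]
      calc ‖f s x - f s z‖ ≤ ρf s * ‖x - z‖ := hsf.1 x z
        _ ≤ Real.toNNReal (ρf s) * ‖x - z‖ :=
            mul_le_mul_of_nonneg_right (Real.le_coe_toNNReal _) (norm_nonneg _)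
    exact hlip.continuous
  have hlaesm := hlL2.aestronglyMeasurable
  have hFaesm : AEStronglyMeasurable F (volume.restrict (Icc (0:ℝ) T)) := by
    have h1 : AEStronglyMeasurable (fun s => (B s (extIcc hT.le θ s)) (l s))
        (volume.restrict (Icc (0:ℝ) T)) :=
      isBoundedBilinearMap_apply.continuous.comp_aestronglyMeasurable (hBθ.prodMk hlaesm)
    exact h1.add hfθ
  have hFbd : ∀ᵐ s ∂(volume.restrict (Icc (0:ℝ) T)), ‖F s‖ ≤ ρ s := by
    filter_upwards [hlSOL, hflip, ae_restrict_mem measurableSet_Icc] with s hsol hsf hsmem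
    have hls : ‖l s‖ ≤ M := hMbd _ (hgC s hsmem (extIcc hT.le θ s)) _ hsol
    have h1 : ‖(B s (extIcc hT.le θ s)) (l s)‖ ≤ (ΥB ‖θ‖ * M) * ρB s := by
      calc ‖(B s (extIcc hT.le θ s)) (l s)‖
          ≤ ‖B s (extIcc hT.le θ s)‖ * ‖l s‖ := ContinuousLinearMap.le_opNorm _ _
        _ ≤ (ρB s * ΥB ‖θ‖) * M := by
            apply mul_le_mul _ hls (norm_nonneg _) (mul_nonneg (hρB0 s) hΥBθ)
            calc ‖B s (extIcc hT.le θ s)‖ ≤ ρB s * ΥB ‖extIcc hT.le θ s‖ := hBbd s hsmem _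
              _ ≤ ρB s * ΥB ‖θ‖ := by
                  apply mul_le_mul_of_nonneg_left _ (hρB0 s)
                  exact hΥBmono (norm_nonneg _) (norm_nonneg _) (hθbn s)
        _ = (ΥB ‖θ‖ * M) * ρB s := by ring
    have h2 : ‖f s (extIcc hT.le θ s)‖ ≤ (1 + ‖θ‖) * ρf s := by
      calc ‖f s (extIcc hT.le θ s)‖
          ≤ ‖f s (extIcc hT.le θ s) - f s 0‖ + ‖f s 0‖ := by
            simpa using norm_add_le (f s (extIcc hT.le θ s) - f s 0) (f s 0)
        _ ≤ ρf s * ‖extIcc hT.le θ s - 0‖ + ρf s := add_le_add (hsf.1 _ 0) hsf.2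
        _ ≤ (1 + ‖θ‖) * ρf s := by
            rw [sub_zero]
            nlinarith [hθbn s, hρf0 s, norm_nonneg (extIcc hT.le θ s)]
    calc ‖F s‖ ≤ ‖(B s (extIcc hT.le θ s)) (l s)‖ + ‖f s (extIcc hT.le θ s)‖ := norm_add_le _ _
      _ ≤ ρ s := add_le_add h1 h2
  have hkernel : ∀ ξ a b : ℝ, 0 ≤ a → a ≤ b → b ≤ ξ → ξ ≤ T →
      IntervalIntegrable (fun s => P (ξ - s) (F s)) volume a b := by
    intro ξ a b ha hab hbξ hξT
    rw [intervalIntegrable_iff_integrableOn_Ioc_of_le hab, IntegrableOn,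
      ← Measure.restrict_congr_set Ioo_ae_eq_Ioc]
    have hmapsto : MapsTo (fun s => ξ - s) (Ioo a b) (Ioc 0 T) := by
      intro s hs
      refine ⟨?_, ?_⟩
      · show 0 < ξ - s
        have := lt_of_lt_of_le hs.2 hbξ
        linarith
      · show ξ - s ≤ T
        linarith [hs.1, ha, hξT]
    have hPc : ContinuousOn (fun s => P (ξ - s)) (Ioo a b) :=
      hPnorm.comp ((continuous_const.sub continuous_id).continuousOn) hmapsto
    have hPa : AEStronglyMeasurable (fun s => P (ξ - s)) (volume.restrict (Ioo a b)) :=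
      hPc.aestronglyMeasurable measurableSet_Ioo
    have hsub : Ioo a b ⊆ Icc 0 T :=
      Ioo_subset_Icc_self.trans (Icc_subset_Icc ha (hbξ.trans hξT))
    have hFa : AEStronglyMeasurable F (volume.restrict (Ioo a b)) :=
      hFaesm.mono_measure (Measure.restrict_mono hsub le_rfl)
    have hbd : ∀ᵐ s ∂(volume.restrict (Ioo a b)), ‖P (ξ - s) (F s)‖ ≤ CP * ρ s := by
      filter_upwards [ae_restrict_of_ae_restrict_of_subset hsub hFbd,
        ae_restrict_mem measurableSet_Ioo] with s h1 h2
      calc ‖P (ξ - s) (F s)‖ ≤ ‖P (ξ - s)‖ * ‖F s‖ := ContinuousLinearMap.le_opNorm _ _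
        _ ≤ CP * ρ s := mul_le_mul (hCP _ (hmapsto h2)) h1 (norm_nonneg _) hCP0
    refine Integrable.mono' ?_
      (isBoundedBilinearMap_apply.continuous.comp_aestronglyMeasurable (hPa.prodMk hFa)) hbd
    exact (hρint.const_mul CP).mono_measure (Measure.restrict_mono hsub le_rfl)
  have hboundInt : ∀ ξ a b : ℝ, 0 ≤ a → a ≤ b → b ≤ ξ → ξ ≤ T →
      ‖∫ s in a..b, P (ξ - s) (F s)‖ ≤ CP * ∫ s in Ioc a b, ρ s := by
    intro ξ a b ha hab hbξ hξT
    have hmapsto : MapsTo (fun s => ξ - s) (Ioo a b) (Ioc 0 T) := by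
      intro s hs
      refine ⟨?_, ?_⟩
      · show 0 < ξ - s
        have := lt_of_lt_of_le hs.2 hbξ
        linarith
      · show ξ - s ≤ T
        linarith [hs.1, ha, hξT]
    have hsub : Ioo a b ⊆ Icc 0 T :=
      Ioo_subset_Icc_self.trans (Icc_subset_Icc ha (hbξ.trans hξT))
    have hbd : ∀ᵐ s ∂(volume.restrict (Set.uIoc a b)), ‖P (ξ - s) (F s)‖ ≤ CP * ρ s := by
      rw [uIoc_of_le hab, ← Measure.restrict_congr_set Ioo_ae_eq_Ioc]
      filter_upwards [ae_restrict_of_ae_restrict_of_subset hsub hFbd,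
        ae_restrict_mem measurableSet_Ioo] with s h1 h2
      calc ‖P (ξ - s) (F s)‖ ≤ ‖P (ξ - s)‖ * ‖F s‖ := ContinuousLinearMap.le_opNorm _ _
        _ ≤ CP * ρ s := mul_le_mul (hCP _ (hmapsto h2)) h1 (norm_nonneg _) hCP0
    have hg : IntervalIntegrable (fun s => CP * ρ s) volume a b := by
      rw [intervalIntegrable_iff_integrableOn_Ioc_of_le hab]
      exact ((hρint.const_mul CP).mono_measure (Measure.restrict_mono
        (Ioc_subset_Icc_self.trans (Icc_subset_Icc ha (hbξ.trans hξT))) le_rfl))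
    calc ‖∫ s in a..b, P (ξ - s) (F s)‖
        ≤ |∫ s in a..b, CP * ρ s| := intervalIntegral.norm_integral_le_abs_of_norm_le hbd hg
      _ = ∫ s in Ioc a b, CP * ρ s := by
          rw [intervalIntegral.integral_of_le hab, abs_of_nonneg]
          exact setIntegral_nonneg measurableSet_Ioc (fun s _ => mul_nonneg hCP0 (hρ0 s))
      _ = CP * ∫ s in Ioc a b, ρ s := integral_const_mul _ _
  have claim : ∀ ξ₁ ξ₂ : Icc (0:ℝ) T, ξ₁.1 ≤ ξ₂.1 →
      ξ₂.1 - ξ₁.1 ≤ min (min (δS/2) (δ₃/2)) δ₂ → ‖y ξ₂ - y ξ₁‖ ≤ ε := by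
    intro ξ₁ ξ₂ hle hdle
    obtain ⟨a, ha⟩ := ξ₁
    obtain ⟨b, hb⟩ := ξ₂
    simp only at hle hdle ⊢
    have hdδS : b - a ≤ δS/2 := le_trans hdle (le_trans (min_le_left _ _) (min_le_left _ _))
    have hdδ₃ : b - a ≤ δ₃/2 := le_trans hdle (le_trans (min_le_left _ _) (min_le_right _ _))
    have hdδ₂ : b - a ≤ δ₂ := le_trans hdle (min_le_right _ _)
    set m := max (a - η) 0 with hmdef
    have hm0 : 0 ≤ m := le_max_right _ _
    have hma : m ≤ a := max_le (by linarith [hη0.le]) ha.1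
    have hamη : a - m ≤ η := by
      have h := le_max_left (a - η) 0
      rw [← hmdef] at h
      linarith
    have hI2a := hkernel b 0 m le_rfl hm0 (hma.trans hle) hb.2
    have hI2b := hkernel b m a hm0 hma hle hb.2
    have hI2c := hkernel b a b ha.1 hle le_rfl hb.2
    have hI1a := hkernel a 0 m le_rfl hm0 hma ha.2
    have hI1b := hkernel a m a hm0 hma le_rfl ha.2
    have e1 : (∫ s in (0:ℝ)..m, P (b - s) (F s)) + (∫ s in m..a, P (b - s) (F s))
        = ∫ s in (0:ℝ)..a, P (b - s) (F s) :=
      intervalIntegral.integral_add_adjacent_intervals hI2a hI2b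
    have e2 : (∫ s in (0:ℝ)..a, P (b - s) (F s)) + (∫ s in a..b, P (b - s) (F s))
        = ∫ s in (0:ℝ)..b, P (b - s) (F s) :=
      intervalIntegral.integral_add_adjacent_intervals (hI2a.trans hI2b) hI2c
    have e3 : (∫ s in (0:ℝ)..m, P (a - s) (F s)) + (∫ s in m..a, P (a - s) (F s))
        = ∫ s in (0:ℝ)..a, P (a - s) (F s) :=
      intervalIntegral.integral_add_adjacent_intervals hI1a hI1b
    have hdecomp : y ⟨b, hb⟩ - y ⟨a, ha⟩
        = (S b (h θ) - S a (h θ))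
          + ((∫ s in (0:ℝ)..m, P (b - s) (F s)) - ∫ s in (0:ℝ)..m, P (a - s) (F s))
          + (∫ s in m..a, P (b - s) (F s))
          - (∫ s in m..a, P (a - s) (F s))
          + (∫ s in a..b, P (b - s) (F s)) := by
      rw [hyF ⟨b, hb⟩, hyF ⟨a, ha⟩]
      simp only
      rw [← e2, ← e1, ← e3]
      abel
    have hAbd : ‖S b (h θ) - S a (h θ)‖ ≤ ε/3 := by
      have hd := hδS b hb a ha (by rw [Real.dist_eq, abs_of_nonneg (by linarith)]; linarith)
      rw [dist_eq_norm] at hd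
      exact hd.le
    have hBbd2 : ‖(∫ s in (0:ℝ)..m, P (b - s) (F s)) - ∫ s in (0:ℝ)..m, P (a - s) (F s)‖
        ≤ ε/3 := by
      rw [← intervalIntegral.integral_sub hI2a hI1a]
      have hsubm : Ioo 0 m ⊆ Icc 0 T :=
        Ioo_subset_Icc_self.trans (Icc_subset_Icc le_rfl (hma.trans ha.2))
      have hbd : ∀ᵐ s ∂(volume.restrict (Set.uIoc 0 m)),
          ‖P (b - s) (F s) - P (a - s) (F s)‖ ≤ (ε/(3*(Cρ+1))) * ρ s := by
        rw [uIoc_of_le hm0, ← Measure.restrict_congr_set Ioo_ae_eq_Ioc]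
        filter_upwards [ae_restrict_of_ae_restrict_of_subset hsubm hFbd,
          ae_restrict_mem measurableSet_Ioo] with s hFs hsmem
        have hsa : s < a - η := by
          rcases lt_max_iff.1 (hmdef ▸ hsmem.2) with h | h
          · exact h
          · exact absurd hsmem.1 (not_lt.2 h.le)
        have h1 : a - s ∈ Icc η T := ⟨by linarith, by linarith [ha.2, hsmem.1]⟩
        have h2 : b - s ∈ Icc η T := ⟨by linarith, by linarith [hb.2, hsmem.1]⟩
        have hP := hδ₃ _ h2 _ h1 (by
          rw [Real.dist_eq]
          have : b - s - (a - s) = b - a := by ring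
          rw [this, abs_of_nonneg (by linarith)]
          linarith [hδ₃0])
        rw [dist_eq_norm] at hP
        calc ‖P (b - s) (F s) - P (a - s) (F s)‖
            = ‖(P (b - s) - P (a - s)) (F s)‖ := by rw [ContinuousLinearMap.sub_apply]
          _ ≤ ‖P (b - s) - P (a - s)‖ * ‖F s‖ := ContinuousLinearMap.le_opNorm _ _
          _ ≤ (ε/(3*(Cρ+1))) * ρ s :=
              mul_le_mul hP.le hFs (norm_nonneg _) (by positivity)
      have hg : IntervalIntegrable (fun s => (ε/(3*(Cρ+1))) * ρ s) volume 0 m := by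
        rw [intervalIntegrable_iff_integrableOn_Ioc_of_le hm0]
        exact (hρint.const_mul _).mono_measure (Measure.restrict_mono
          (Ioc_subset_Icc_self.trans (Icc_subset_Icc le_rfl (hma.trans ha.2))) le_rfl)
      calc ‖∫ s in (0:ℝ)..m, (P (b - s) (F s) - P (a - s) (F s))‖
          ≤ |∫ s in (0:ℝ)..m, (ε/(3*(Cρ+1))) * ρ s| :=
            intervalIntegral.norm_integral_le_abs_of_norm_le hbd hg
        _ = ∫ s in Ioc (0:ℝ) m, (ε/(3*(Cρ+1))) * ρ s := by
            rw [intervalIntegral.integral_of_le hm0, abs_of_nonneg]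
            exact setIntegral_nonneg measurableSet_Ioc
              (fun s _ => mul_nonneg (by positivity) (hρ0 s))
        _ = (ε/(3*(Cρ+1))) * ∫ s in Ioc (0:ℝ) m, ρ s := integral_const_mul _ _
        _ ≤ (ε/(3*(Cρ+1))) * Cρ := by
            apply mul_le_mul_of_nonneg_left (hIocle 0 m le_rfl (hma.trans ha.2)) (by positivity)
        _ ≤ ε/3 := by
            rw [div_mul_eq_mul_div, div_le_div_iff₀ (by positivity) (by positivity)]
            nlinarith
    have hCbd : ‖∫ s in m..a, P (b - s) (F s)‖ ≤ ε/9 := by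
      calc ‖∫ s in m..a, P (b - s) (F s)‖ ≤ CP * ∫ s in Ioc m a, ρ s :=
            hboundInt b m a hm0 hma hle hb.2
        _ ≤ CP * (ε/(9*(CP+1))) := mul_le_mul_of_nonneg_left
            (hsmall m a hm0 hma ha.2 (by linarith)) hCP0
        _ ≤ ε/9 := by
            rw [mul_div_assoc']  -- CP * ε / (9*(CP+1))
            rw [div_le_div_iff₀ (by positivity) (by positivity)]
            nlinarith
    have hDbd : ‖∫ s in m..a, P (a - s) (F s)‖ ≤ ε/9 := by
      calc ‖∫ s in m..a, P (a - s) (F s)‖ ≤ CP * ∫ s in Ioc m a, ρ s :=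
            hboundInt a m a hm0 hma le_rfl ha.2
        _ ≤ CP * (ε/(9*(CP+1))) := mul_le_mul_of_nonneg_left
            (hsmall m a hm0 hma ha.2 (by linarith)) hCP0
        _ ≤ ε/9 := by
            rw [mul_div_assoc']
            rw [div_le_div_iff₀ (by positivity) (by positivity)]
            nlinarith
    have hEbd : ‖∫ s in a..b, P (b - s) (F s)‖ ≤ ε/9 := by
      calc ‖∫ s in a..b, P (b - s) (F s)‖ ≤ CP * ∫ s in Ioc a b, ρ s :=
            hboundInt b a b ha.1 hle le_rfl hb.2
        _ ≤ CP * (ε/(9*(CP+1))) := mul_le_mul_of_nonneg_left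
            (hsmall a b ha.1 hle hb.2 (by linarith)) hCP0
        _ ≤ ε/9 := by
            rw [mul_div_assoc']
            rw [div_le_div_iff₀ (by positivity) (by positivity)]
            nlinarith
    rw [hdecomp]
    have n1 : ‖(S b (h θ) - S a (h θ))
          + ((∫ s in (0:ℝ)..m, P (b - s) (F s)) - ∫ s in (0:ℝ)..m, P (a - s) (F s))
          + (∫ s in m..a, P (b - s) (F s))
          - (∫ s in m..a, P (a - s) (F s))
          + (∫ s in a..b, P (b - s) (F s))‖
        ≤ ‖S b (h θ) - S a (h θ)‖
          + ‖(∫ s in (0:ℝ)..m, P (b - s) (F s)) - ∫ s in (0:ℝ)..m, P (a - s) (F s)‖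
          + ‖∫ s in m..a, P (b - s) (F s)‖
          + ‖∫ s in m..a, P (a - s) (F s)‖
          + ‖∫ s in a..b, P (b - s) (F s)‖ := by
      calc ‖_ + _ + _ - _ + _‖ ≤ ‖_ + _ + _ - _‖ + ‖_‖ := norm_add_le _ _
        _ ≤ (‖_ + _ + _‖ + ‖_‖) + ‖_‖ := add_le_add_left (norm_sub_le _ _) _
        _ ≤ ((‖_‖ + ‖_‖ + ‖_‖) + ‖_‖) + ‖_‖ :=
            add_le_add_left (add_le_add_left norm_add₃_le _) _
    refine le_trans n1 ?_
    linarith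
  intro ξ₁ ξ₂ hd
  rcases le_total ξ₁.1 ξ₂.1 with hc | hc
  · refine claim ξ₁ ξ₂ hc ?_
    rwa [abs_of_nonneg (by linarith)] at hd
  · rw [norm_sub_rev]
    refine claim ξ₂ ξ₁ hc ?_
    rw [abs_sub_comm] at hd
    rwa [abs_of_nonneg (by linarith)] at hd
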